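/- Consider an n-bit Fibonacci FSR with update F determined by feedback f(X) = X 0 + g(X) + m(X), and a Galois FSR with update G where the last stage is fed f'(X) = X 0 + g(X) and stage b is fed X (b+1) + m_b(X), with m a monomial X_{i_1}···X_{i_k} (all i_j ≥ n-1-b... i.e. min index of m ≥ n-1-b) and m_b the monomial with each index decreased by n-1-b. Suppose g depends only on variables with index ≤ b. Define φ(X) i = X i + (m with each index decreased by n - i)(X) for b+1 ≤ i ≤ n-1, and φ(X) i = X i for i ≤ b. Then G ∘ φ = φ ∘ F. -/

import Mathlib

/-- The monomial with index set `S` (indices as naturals, out-of-range indices ignored). -/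
def mono (n : ℕ) (S : Finset ℕ) (X : Fin n → ZMod 2) : ZMod 2 :=
  ∏ i ∈ S, if h : i < n then X ⟨i, h⟩ else 1

lemma mono_congr (n : ℕ) (S : Finset ℕ) (X Y : Fin n → ZMod 2)
    (h : ∀ j ∈ S, ∀ hj : j < n, X ⟨j, hj⟩ = Y ⟨j, hj⟩) :
    mono n S X = mono n S Y := by
  unfold mono
  refine Finset.prod_congr rfl fun j hj => ?_
  by_cases h' : j < n <;> simp [h', h j hj]

lemma mono_image (n c : ℕ) (S : Finset ℕ) (hc : ∀ j ∈ S, c ≤ j) (X : Fin n → ZMod 2) :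
    mono n (S.image (fun j => j - c)) X =
      ∏ j ∈ S, if h : j - c < n then X ⟨j - c, h⟩ else 1 := by
  unfold mono
  rw [Finset.prod_image]
  intro x hx y hy hxy
  have := hc x hx; have := hc y hy
  simp only at hxy
  omega

lemma add_add_self (a m : ZMod 2) : a + m + m = a := by
  rw [add_assoc, CharTwo.add_self_eq_zero, add_zero]

/-- Single-monomial shifting lemma (Lemma 1, Case 1): shifting a monomial `m` from `f_{n-1}`
to `f_b` and compensating via `φ` conjugates the Fibonacci update to the Galois update. -/
theorem stmt3 (n b : ℕ) (hb : b + 1 < n) (S : Finset ℕ)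
    (hS : ∀ j ∈ S, n - 1 - b ≤ j ∧ j ≤ n - 1)
    (g : (Fin n → ZMod 2) → ZMod 2)
    (hg : ∀ X Y : Fin n → ZMod 2, (∀ i : Fin n, (i : ℕ) ≤ b → X i = Y i) → g X = g Y)
    (F G φ : (Fin n → ZMod 2) → Fin n → ZMod 2)
    (hF : F = fun (X : Fin n → ZMod 2) (i : Fin n) =>
      if h : (i : ℕ) + 1 < n then X ⟨(i : ℕ) + 1, h⟩
      else X ⟨0, i.pos⟩ + g X + mono n S X)
    (hG : G = fun (X : Fin n → ZMod 2) (i : Fin n) =>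
      if h : (i : ℕ) + 1 < n then
        (if (i : ℕ) = b then X ⟨(i : ℕ) + 1, h⟩ + mono n (S.image (fun j => j - (n - 1 - b))) X
         else X ⟨(i : ℕ) + 1, h⟩)
      else X ⟨0, i.pos⟩ + g X)
    (hφ : φ = fun (X : Fin n → ZMod 2) (i : Fin n) =>
      if b + 1 ≤ (i : ℕ) then X i + mono n (S.image (fun j => j - (n - (i : ℕ)))) X
      else X i) :
    G ∘ φ = φ ∘ F := by
  subst hF hG hφ
  funext X i
  simp only [Function.comp_apply]
  -- key fact: φ X agrees with X on indices ≤ b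
  have hφlow : ∀ k : Fin n, (k : ℕ) ≤ b →
      (if b + 1 ≤ (k : ℕ) then X k + mono n (S.image (fun j => j - (n - (k : ℕ)))) X
       else X k) = X k := by
    intro k hk
    rw [if_neg (by omega)]
  by_cases h1 : (i : ℕ) + 1 < n
  · rw [dif_pos h1]
    by_cases hib : (i : ℕ) = b
    · -- case i = b
      rw [if_pos hib]
      have h2 : ¬ b + 1 ≤ (i : ℕ) := by omega
      rw [dif_pos h1, if_neg h2]
      have hmb : mono n (S.image fun j => j - (n - 1 - b))
          (fun k : Fin n =>
            if b + 1 ≤ (k : ℕ) then X k + mono n (S.image (fun j => j - (n - (k : ℕ)))) X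
            else X k) = mono n (S.image fun j => j - (n - 1 - b)) X := by
        refine mono_congr _ _ _ _ ?_
        intro j hj hjn
        obtain ⟨j', hj', rfl⟩ := Finset.mem_image.mp hj
        have := hS j' hj'
        exact hφlow ⟨j' - (n - 1 - b), hjn⟩ (by simp; omega)
      rw [hmb]
      have hφtop : (if b + 1 ≤ (⟨(i : ℕ) + 1, h1⟩ : Fin n) then
          X ⟨(i : ℕ) + 1, h1⟩ +
            mono n (S.image (fun j => j - (n - ((⟨(i : ℕ) + 1, h1⟩ : Fin n) : ℕ)))) X
          else X ⟨(i : ℕ) + 1, h1⟩) =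
          X ⟨(i : ℕ) + 1, h1⟩ + mono n (S.image (fun j => j - (n - 1 - b))) X := by
        rw [if_pos (by simp; omega)]
        have he : n - ((⟨(i : ℕ) + 1, h1⟩ : Fin n) : ℕ) = n - 1 - b := by simp; omega
        rw [he]
      rw [hφtop, add_add_self]
    · rw [if_neg hib]
      by_cases h3 : b + 1 ≤ (i : ℕ)
      · -- case i > b
        rw [if_pos h3, dif_pos h1]
        rw [if_pos (show b + 1 ≤ ((⟨(i : ℕ) + 1, h1⟩ : Fin n) : ℕ) by simp; omega)]
        congr 1
        rw [mono_image n (n - (i : ℕ)) S (fun j hj => by have := hS j hj; omega),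
          mono_image n (n - ((⟨(i : ℕ) + 1, h1⟩ : Fin n) : ℕ)) S
            (fun j hj => by have := hS j hj; simp; omega)]
        refine Finset.prod_congr rfl fun j hj => ?_
        have hj' := hS j hj
        have hlt : j - (n - ((⟨(i : ℕ) + 1, h1⟩ : Fin n) : ℕ)) < n := by simp; omega
        have hlt2 : j - (n - (i : ℕ)) < n := by omega
        rw [dif_pos hlt, dif_pos hlt2]
        rw [dif_pos (show (j - (n - (i : ℕ))) + 1 < n by omega)]
        congr 1
        apply Fin.ext
        simp
        omega
      · -- case i < b
        rw [if_neg h3, dif_pos h1, if_neg (show ¬ b + 1 ≤ ((⟨(i : ℕ) + 1, h1⟩ : Fin n) : ℕ)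
          by simp; omega)]
  · -- case i = n - 1
    rw [dif_neg h1, dif_neg h1]
    have hin : (i : ℕ) = n - 1 := by have := i.isLt; omega
    rw [if_neg (show ¬ b + 1 ≤ (((⟨0, i.pos⟩ : Fin n)) : ℕ) by simp)]
    have hgφ : g (fun k : Fin n =>
        if b + 1 ≤ (k : ℕ) then X k + mono n (S.image (fun j => j - (n - (k : ℕ)))) X
        else X k) = g X := hg _ _ (fun k hk => hφlow k hk)
    rw [hgφ]
    rw [if_pos (show b + 1 ≤ (i : ℕ) by omega)]
    have hm1 : mono n (S.image (fun j => j - (n - (i : ℕ))))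
        (fun k : Fin n => if h : (k : ℕ) + 1 < n then X ⟨(k : ℕ) + 1, h⟩
          else X ⟨0, k.pos⟩ + g X + mono n S X) = mono n S X := by
      have hni : n - (i : ℕ) = 1 := by omega
      rw [hni, mono_image n 1 S (fun j hj => by have := hS j hj; omega)]
      unfold mono
      refine Finset.prod_congr rfl fun j hj => ?_
      have hj' := hS j hj
      rw [dif_pos (show j - 1 < n by omega), dif_pos (show j < n by omega),
        dif_pos (show (j - 1 : ℕ) + 1 < n by omega)]
      congr 1
      apply Fin.ext
      simp
      omega
    rw [hm1]
    abel_nf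
    simp [two_smul, CharTwo.add_self_eq_zero]
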